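/- Let π be any policy of the MDP and let π' be any policy that is greedy with respect to v_π (i.e. T_{π'} v_π = T v_π). Then ‖v_* − v_{π'}‖_∞ ≤ γ ‖v_* − v_π‖_∞. In particular, the sequence (‖v_* − v_{π_k}‖_∞)_{k≥0} built by Howard's PI is contracting with coefficient γ. -/

import Mathlib

open Matrix BigOperators

/-- A finite discounted MDP with `n ≥ 1` states and `m ≥ 2` actions:
transition probabilities `p i a j`, rewards `r i a j`, discount factor `γ ∈ (0,1)`. -/
structure MDP (n m : ℕ) : Type where
  n_pos : 1 ≤ n
  m_ge_two : 2 ≤ m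
  p : Fin n → Fin m → Fin n → ℝ
  r : Fin n → Fin m → Fin n → ℝ
  γ : ℝ
  p_nonneg : ∀ i a j, 0 ≤ p i a j
  p_sum : ∀ i a, ∑ j, p i a j = 1
  γ_pos : 0 < γ
  γ_lt_one : γ < 1

/-- A (stationary deterministic) policy. -/
abbrev MDP.Policy (n m : ℕ) : Type := Fin n → Fin m

namespace MDP

variable {n m : ℕ}

/-- The row-stochastic transition matrix `P_π` of a policy. -/
def P (M : MDP n m) (π : Policy n m) : Matrix (Fin n) (Fin n) ℝ :=
  Matrix.of fun i j => M.p i (π i) j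

/-- The expected reward vector `r_π` of a policy. -/
def rPol (M : MDP n m) (π : Policy n m) : Fin n → ℝ :=
  fun i => ∑ j, M.p i (π i) j * M.r i (π i) j

/-- The Bellman operator `T_π v = r_π + γ P_π v` of a policy. -/
def Tpol (M : MDP n m) (π : Policy n m) (v : Fin n → ℝ) : Fin n → ℝ :=
  fun i => M.rPol π i + M.γ * (M.P π *ᵥ v) i

/-- `IsValue M V` asserts that, for every policy `π`, `V π` is the value function `v_π`,
i.e. the (unique) solution of the Bellman equation `v_π = T_π v_π`. -/
def IsValue (M : MDP n m) (V : Policy n m → Fin n → ℝ) : Prop :=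
  ∀ π, V π = M.Tpol π (V π)

/-- The optimal Bellman operator `T v = max_π T_π v` (componentwise maximum). -/
noncomputable def T (M : MDP n m) (v : Fin n → ℝ) : Fin n → ℝ :=
  fun i => ⨆ π : Policy n m, M.Tpol π v i

/-- The optimal value function `v_*`, the componentwise maximum of `v_π` over policies. -/
noncomputable def vStar (M : MDP n m) (V : Policy n m → Fin n → ℝ) : Fin n → ℝ :=
  fun i => ⨆ π : Policy n m, V π i

/-- A policy is optimal when its value equals `v_*`. -/
def IsOptimal (M : MDP n m) (V : Policy n m → Fin n → ℝ) (π : Policy n m) : Prop :=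
  V π = M.vStar V

/-- `π'` is greedy with respect to `v_π`: `T_{π'} v_π = T v_π`.  One step of Howard's PI
from a non-optimal `π` moves to such a `π'`. -/
def Greedy (M : MDP n m) (V : Policy n m → Fin n → ℝ) (π π' : Policy n m) : Prop :=
  M.Tpol π' (V π) = M.T (V π)

/-- One step of Simplex-PI: `π'` agrees with `π` except at a single state `s` maximizing
the advantage `a_π(i) = (T v_π - v_π)(i)`, where `π'(s)` achieves `T v_π(s)`. -/
def SimplexStep (M : MDP n m) (V : Policy n m → Fin n → ℝ) (π π' : Policy n m) : Prop :=
  ∃ s : Fin n, (∀ i, i ≠ s → π' i = π i) ∧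
    (∀ i, M.T (V π) i - V π i ≤ M.T (V π) s - V π s) ∧
    M.Tpol π' (V π) s = M.T (V π) s

/-- The vector `x_π = (I - γ P_πᵀ)⁻¹ 1`. -/
noncomputable def xPol (M : MDP n m) (π : Policy n m) : Fin n → ℝ :=
  ((1 : Matrix (Fin n) (Fin n) ℝ) - M.γ • (M.P π)ᵀ)⁻¹ *ᵥ (fun _ => (1 : ℝ))

/-- `R` is a recurrent class of `π`: nonempty, closed under positive-probability
transitions of `P_π`, and every state of `R` is reachable from every other state of `R`
along positive-probability transitions.  (For a deterministic MDP this is the notion of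
a cycle of `π`.) -/
def IsRecClass (M : MDP n m) (π : Policy n m) (R : Set (Fin n)) : Prop :=
  R.Nonempty ∧ (∀ i ∈ R, ∀ j, 0 < M.P π i j → j ∈ R) ∧
    ∀ i ∈ R, ∀ j ∈ R, Relation.ReflTransGen (fun a b => 0 < M.P π a b) i j

/-- A state is recurrent for `π` if it belongs to some recurrent class of `π`. -/
def Recurrent (M : MDP n m) (π : Policy n m) (i : Fin n) : Prop :=
  ∃ R : Set (Fin n), M.IsRecClass π R ∧ i ∈ R

/-- A state is transient for `π` if it is not recurrent for `π`. -/
def Transient (M : MDP n m) (π : Policy n m) (i : Fin n) : Prop :=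
  ¬ M.Recurrent π i

/-- Assumption 1: `τ_t, τ_r ≥ 1` with `x_π(i) ≤ τ_t` for transient states and
`x_π(i) ≥ n / ((1-γ) τ_r)` for recurrent states, for every policy `π`. -/
def Ass1 (M : MDP n m) (τt τr : ℝ) : Prop :=
  1 ≤ τt ∧ 1 ≤ τr ∧
    (∀ π i, M.Transient π i → M.xPol π i ≤ τt) ∧
    (∀ π i, M.Recurrent π i → (n : ℝ) / ((1 - M.γ) * τr) ≤ M.xPol π i)

/-- Assumption 2: the state space is partitioned into a set of states transient for every
policy and a set of states recurrent for every policy. -/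
def Ass2 (M : MDP n m) : Prop :=
  ∃ 𝒯 ℛ : Set (Fin n), 𝒯 ∪ ℛ = Set.univ ∧ 𝒯 ∩ ℛ = ∅ ∧
    ∀ π : Policy n m, (∀ i ∈ 𝒯, M.Transient π i) ∧ (∀ i ∈ ℛ, M.Recurrent π i)

/-- The MDP is deterministic when every transition probability is 0 or 1. -/
def Deterministic (M : MDP n m) : Prop :=
  ∀ i a j, M.p i a j = 0 ∨ M.p i a j = 1

/-- `V_max = (max_π ‖r_π‖_∞) / (1 - γ)`. -/
noncomputable def Vmax (M : MDP n m) : ℝ :=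
  (⨆ π : Policy n m, ‖M.rPol π‖) / (1 - M.γ)

end MDP

/-- one step of Howard's PI contracts the max-norm distance to `v_*`
with coefficient `γ`. -/
theorem howard_contraction {n m : ℕ} (M : MDP n m)
    (V : MDP.Policy n m → Fin n → ℝ) (hV : M.IsValue V)
    (π π' : MDP.Policy n m) (hgreedy : M.Greedy V π π') :
    ‖M.vStar V - V π'‖ ≤ M.γ * ‖M.vStar V - V π‖ := by
  haveI : Nonempty (Fin m) := ⟨⟨0, by have := M.m_ge_two; omega⟩⟩
  haveI : Nonempty (Fin n) := ⟨⟨0, by have := M.n_pos; omega⟩⟩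
  haveI : Nonempty (MDP.Policy n m) := inferInstance
  have hγ0 := M.γ_pos
  have hγ1 := M.γ_lt_one
  -- basic mulVec facts
  have mulVec_mono : ∀ (σ : MDP.Policy n m) (u w : Fin n → ℝ), (∀ j, u j ≤ w j) →
      ∀ i, (M.P σ *ᵥ u) i ≤ (M.P σ *ᵥ w) i := by
    intro σ u w h i
    simp only [Matrix.mulVec, dotProduct, MDP.P, Matrix.of_apply]
    exact Finset.sum_le_sum fun j _ => mul_le_mul_of_nonneg_left (h j) (M.p_nonneg i (σ i) j)
  have mulVec_le_const : ∀ (σ : MDP.Policy n m) (u : Fin n → ℝ) (c : ℝ), (∀ j, u j ≤ c) →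
      ∀ i, (M.P σ *ᵥ u) i ≤ c := by
    intro σ u c h i
    simp only [Matrix.mulVec, dotProduct, MDP.P, Matrix.of_apply]
    calc ∑ j, M.p i (σ i) j * u j ≤ ∑ j, M.p i (σ i) j * c :=
          Finset.sum_le_sum fun j _ => mul_le_mul_of_nonneg_left (h j) (M.p_nonneg i (σ i) j)
      _ = c := by rw [← Finset.sum_mul, M.p_sum, one_mul]
  have const_le_mulVec : ∀ (σ : MDP.Policy n m) (u : Fin n → ℝ) (c : ℝ), (∀ j, c ≤ u j) →
      ∀ i, c ≤ (M.P σ *ᵥ u) i := by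
    intro σ u c h i
    simp only [Matrix.mulVec, dotProduct, MDP.P, Matrix.of_apply]
    calc c = ∑ j, M.p i (σ i) j * c := by rw [← Finset.sum_mul, M.p_sum, one_mul]
      _ ≤ ∑ j, M.p i (σ i) j * u j :=
          Finset.sum_le_sum fun j _ => mul_le_mul_of_nonneg_left (h j) (M.p_nonneg i (σ i) j)
  have mulVec_sub : ∀ (σ : MDP.Policy n m) (u w : Fin n → ℝ) (i : Fin n),
      (M.P σ *ᵥ (u - w)) i = (M.P σ *ᵥ u) i - (M.P σ *ᵥ w) i := by
    intro σ u w i; rw [Matrix.mulVec_sub]; rfl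
  -- Tpol monotone
  have hTmono : ∀ (σ : MDP.Policy n m) (u w : Fin n → ℝ), (∀ j, u j ≤ w j) →
      ∀ i, M.Tpol σ u i ≤ M.Tpol σ w i := by
    intro σ u w h i
    simp only [MDP.Tpol]
    have := mulVec_mono σ u w h i
    nlinarith
  -- vStar dominates every V σ
  have hbdd : ∀ i, BddAbove (Set.range fun σ : MDP.Policy n m => V σ i) :=
    fun i => (Set.finite_range _).bddAbove
  have hvle : ∀ (σ : MDP.Policy n m) i, V σ i ≤ M.vStar V i := fun σ i => le_ciSup (hbdd i) σ
  -- Tpol ≤ T, and T attained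
  have hTbdd : ∀ (v : Fin n → ℝ) i, BddAbove (Set.range fun σ : MDP.Policy n m => M.Tpol σ v i) :=
    fun v i => (Set.finite_range _).bddAbove
  have hTpol_le_T : ∀ (σ : MDP.Policy n m) (v : Fin n → ℝ) i, M.Tpol σ v i ≤ M.T v i :=
    fun σ v i => le_ciSup (hTbdd v i) σ
  have hT_attained : ∀ (v : Fin n → ℝ) i, ∃ σ : MDP.Policy n m, M.T v i = M.Tpol σ v i := by
    intro v i
    obtain ⟨σ, hσ⟩ := Finite.exists_max (fun σ : MDP.Policy n m => M.Tpol σ v i)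
    exact ⟨σ, le_antisymm (ciSup_le hσ) (hTpol_le_T σ v i)⟩
  -- v* ≤ T v*
  have hvstar_le : ∀ i, M.vStar V i ≤ M.T (M.vStar V) i := by
    intro i
    refine ciSup_le fun σ => ?_
    calc V σ i = M.Tpol σ (V σ) i := by rw [← hV σ]
      _ ≤ M.Tpol σ (M.vStar V) i := hTmono σ _ _ (fun j => hvle σ j) i
      _ ≤ M.T (M.vStar V) i := hTpol_le_T σ _ i
  -- policy improvement: V π ≤ V π'
  have himp : ∀ i, V π i ≤ V π' i := by
    obtain ⟨i0, hi0⟩ := Finite.exists_min (fun i => V π' i - V π i)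
    have h2 : V π i0 ≤ M.Tpol π' (V π) i0 := by
      have : M.Tpol π' (V π) i0 = M.T (V π) i0 := by rw [hgreedy]
      rw [this]
      calc V π i0 = M.Tpol π (V π) i0 := by rw [← hV π]
        _ ≤ M.T (V π) i0 := hTpol_le_T π _ i0
    have h3 : M.γ * (V π' i0 - V π i0) ≤ M.Tpol π' (V π') i0 - M.Tpol π' (V π) i0 := by
      have hc := const_le_mulVec π' (V π' - V π) (V π' i0 - V π i0) (fun j => hi0 j) i0
      rw [mulVec_sub] at hc
      simp only [MDP.Tpol]
      nlinarith
    have key : 0 ≤ V π' i0 - V π i0 := by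
      have h1 : V π' i0 = M.Tpol π' (V π') i0 := by rw [← hV π']
      nlinarith
    intro i
    have := hi0 i
    linarith
  -- main componentwise bound
  have hnorm_comp : ∀ j, (M.vStar V - V π) j ≤ ‖M.vStar V - V π‖ := by
    intro j
    calc (M.vStar V - V π) j ≤ |(M.vStar V - V π) j| := le_abs_self _
      _ ≤ ‖M.vStar V - V π‖ := by
          simpa [Real.norm_eq_abs] using norm_le_pi_norm (M.vStar V - V π) j
  have hmain : ∀ i, M.vStar V i - V π' i ≤ M.γ * ‖M.vStar V - V π‖ := by
    intro i
    have hB : M.T (V π) i ≤ V π' i := by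
      have h1 : M.T (V π) i = M.Tpol π' (V π) i := by rw [hgreedy]
      rw [h1]
      calc M.Tpol π' (V π) i ≤ M.Tpol π' (V π') i := hTmono π' _ _ himp i
        _ = V π' i := by rw [← hV π']
    obtain ⟨σ, hσ⟩ := hT_attained (M.vStar V) i
    have h2 : M.T (M.vStar V) i - M.T (V π) i ≤ M.γ * ‖M.vStar V - V π‖ := by
      have ht := hTpol_le_T σ (V π) i
      have hb : (M.P σ *ᵥ (M.vStar V - V π)) i ≤ ‖M.vStar V - V π‖ :=
        mulVec_le_const σ _ _ hnorm_comp i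
      rw [mulVec_sub] at hb
      rw [hσ]
      simp only [MDP.Tpol] at ht ⊢
      nlinarith
    have := hvstar_le i
    linarith
  have hrhs : 0 ≤ M.γ * ‖M.vStar V - V π‖ := mul_nonneg hγ0.le (norm_nonneg _)
  rw [pi_norm_le_iff_of_nonneg hrhs]
  intro i
  rw [Real.norm_eq_abs, abs_of_nonneg (by simp only [Pi.sub_apply, sub_nonneg]; exact hvle π' i)]
  simpa using hmain i
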